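/- Let n ≥ 2 and let B be any n×n complex matrix. Then Σ_{i≠j} |(Bᴴ B)_{ij}| ≤ Σ_{i≠j} Σ_{k∉{i,j}} |B_{ki}|² + 2·√( (n−1) · (Σ_i |B_{ii}|²) · (Σ_{i≠j} |B_{ij}|²) ). -/

import Mathlib

open Matrix Finset

private lemma swap_sym {n : ℕ} (h : Fin n → Fin n → ℝ) :
    ∑ i, ∑ j ∈ univ.filter (fun j => j ≠ i), h i j
      = ∑ i, ∑ j ∈ univ.filter (fun j => j ≠ i), h j i := by
  simp only [Finset.sum_filter]
  rw [Finset.sum_comm]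
  refine Finset.sum_congr rfl fun i _ => Finset.sum_congr rfl fun j _ => ?_
  simp [ne_comm]

private lemma cs2 {n : ℕ} (t : Fin n → Finset (Fin n)) (f g : Fin n → Fin n → ℝ) :
    (∑ i, ∑ j ∈ t i, f i j * g i j) ^ 2 ≤
      (∑ i, ∑ j ∈ t i, f i j ^ 2) * (∑ i, ∑ j ∈ t i, g i j ^ 2) := by
  classical
  have h := Finset.sum_mul_sq_le_sq_mul_sq (univ.sigma t)
    (fun p => f p.1 p.2) (fun p => g p.1 p.2)
  simpa [Finset.sum_sigma] using h

/-- Double Cauchy–Schwarz step in the proof of Lemma 1: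
`∑_{i≠j} |(Bᴴ B)_{ij}| ≤ ∑_{i≠j} ∑_{k∉{i,j}} |B_{ki}|² +
  2 √((n-1)(∑_i |B_{ii}|²)(∑_{i≠j} |B_{ij}|²))`. -/
theorem duality_cauchy_schwarz_step (n : ℕ) (hn : 2 ≤ n)
    (B : Matrix (Fin n) (Fin n) ℂ) :
    ∑ i, ∑ j ∈ univ.filter (fun j => j ≠ i), ‖(Bᴴ * B) i j‖ ≤
      (∑ i, ∑ j ∈ univ.filter (fun j => j ≠ i),
        ∑ k ∈ univ.filter (fun k => k ≠ i ∧ k ≠ j), ‖B k i‖ ^ 2) +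
      2 * Real.sqrt (((n : ℝ) - 1) * (∑ i, ‖B i i‖ ^ 2) *
        (∑ i, ∑ j ∈ univ.filter (fun j => j ≠ i), ‖B i j‖ ^ 2)) := by
  classical
  set a : Fin n → Fin n → ℝ := fun i j => ‖B i j‖ with ha
  have ha0 : ∀ i j, 0 ≤ a i j := fun i j => norm_nonneg _
  -- pointwise triangle inequality
  have habs : ∀ i j : Fin n, ‖(Bᴴ * B) i j‖ ≤ ∑ k, a k i * a k j := by
    intro i j
    rw [Matrix.mul_apply]
    refine (norm_sum_le _ _).trans_eq ?_
    refine Finset.sum_congr rfl fun k _ => ?_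
    simp [Matrix.conjTranspose_apply, norm_mul, ha]
  -- split the k-sum
  have hsplit : ∀ i j : Fin n, j ≠ i →
      (∑ k, a k i * a k j) =
        (∑ k ∈ univ.filter (fun k => k ≠ i ∧ k ≠ j), a k i * a k j)
        + (a i i * a i j + a j i * a j j) := by
    intro i j hij
    rw [← Finset.sum_filter_add_sum_filter_not univ (fun k => k ≠ i ∧ k ≠ j)]
    congr 1
    have hset : univ.filter (fun k : Fin n => ¬(k ≠ i ∧ k ≠ j)) = {i, j} := by
      ext k; simp [not_and_or, or_comm]; tauto
    rw [hset, Finset.sum_pair (Ne.symm hij)]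
  -- step 1: bound LHS by triple sum
  have step1 :
      ∑ i, ∑ j ∈ univ.filter (fun j => j ≠ i), ‖(Bᴴ * B) i j‖ ≤
        (∑ i, ∑ j ∈ univ.filter (fun j => j ≠ i),
          ∑ k ∈ univ.filter (fun k => k ≠ i ∧ k ≠ j), a k i * a k j)
        + 2 * ∑ i, ∑ j ∈ univ.filter (fun j => j ≠ i), a i i * a i j := by
    have h1 : ∑ i, ∑ j ∈ univ.filter (fun j => j ≠ i), ‖(Bᴴ * B) i j‖
        ≤ ∑ i, ∑ j ∈ univ.filter (fun j => j ≠ i), ∑ k, a k i * a k j :=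
      Finset.sum_le_sum fun i _ => Finset.sum_le_sum fun j _ => habs i j
    refine h1.trans_eq ?_
    have h2 : ∀ i, ∀ j ∈ univ.filter (fun j => j ≠ i),
        (∑ k, a k i * a k j) =
          (∑ k ∈ univ.filter (fun k => k ≠ i ∧ k ≠ j), a k i * a k j)
          + (a i i * a i j + a j i * a j j) := by
      intro i j hj
      exact hsplit i j (by simpa using hj)
    calc ∑ i, ∑ j ∈ univ.filter (fun j => j ≠ i), ∑ k, a k i * a k j
        = (∑ i, ∑ j ∈ univ.filter (fun j => j ≠ i),
            ∑ k ∈ univ.filter (fun k => k ≠ i ∧ k ≠ j), a k i * a k j)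
          + ((∑ i, ∑ j ∈ univ.filter (fun j => j ≠ i), a i i * a i j)
            + ∑ i, ∑ j ∈ univ.filter (fun j => j ≠ i), a j i * a j j) := by
          simp only [← Finset.sum_add_distrib]
          exact Finset.sum_congr rfl fun i _ => Finset.sum_congr rfl fun j hj => h2 i j hj
      _ = (∑ i, ∑ j ∈ univ.filter (fun j => j ≠ i),
            ∑ k ∈ univ.filter (fun k => k ≠ i ∧ k ≠ j), a k i * a k j)
          + 2 * ∑ i, ∑ j ∈ univ.filter (fun j => j ≠ i), a i i * a i j := by
          rw [swap_sym (fun i j => a j i * a j j)]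
          simp only [mul_comm]
          ring
  -- step 2: AM-GM on the off-diagonal triple sum
  have step2 : (∑ i, ∑ j ∈ univ.filter (fun j => j ≠ i),
      ∑ k ∈ univ.filter (fun k => k ≠ i ∧ k ≠ j), a k i * a k j)
      ≤ ∑ i, ∑ j ∈ univ.filter (fun j => j ≠ i),
          ∑ k ∈ univ.filter (fun k => k ≠ i ∧ k ≠ j), a k i ^ 2 := by
    have hle : (∑ i, ∑ j ∈ univ.filter (fun j => j ≠ i),
        ∑ k ∈ univ.filter (fun k => k ≠ i ∧ k ≠ j), a k i * a k j)
        ≤ ∑ i, ∑ j ∈ univ.filter (fun j => j ≠ i),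
            ∑ k ∈ univ.filter (fun k => k ≠ i ∧ k ≠ j), (a k i ^ 2 + a k j ^ 2) / 2 := by
      refine Finset.sum_le_sum fun i _ => Finset.sum_le_sum fun j _ =>
        Finset.sum_le_sum fun k _ => ?_
      nlinarith [sq_nonneg (a k i - a k j)]
    refine hle.trans_eq ?_
    have hsym : (∑ i, ∑ j ∈ univ.filter (fun j => j ≠ i),
        ∑ k ∈ univ.filter (fun k => k ≠ i ∧ k ≠ j), a k j ^ 2)
        = ∑ i, ∑ j ∈ univ.filter (fun j => j ≠ i),
            ∑ k ∈ univ.filter (fun k => k ≠ i ∧ k ≠ j), a k i ^ 2 := by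
      rw [swap_sym (fun i j => ∑ k ∈ univ.filter (fun k => k ≠ i ∧ k ≠ j), a k j ^ 2)]
      refine Finset.sum_congr rfl fun i _ => Finset.sum_congr rfl fun j _ => ?_
      refine Finset.sum_congr ?_ fun k _ => rfl
      ext k; simp [and_comm]
    calc ∑ i, ∑ j ∈ univ.filter (fun j => j ≠ i),
          ∑ k ∈ univ.filter (fun k => k ≠ i ∧ k ≠ j), (a k i ^ 2 + a k j ^ 2) / 2
        = ((∑ i, ∑ j ∈ univ.filter (fun j => j ≠ i),
            ∑ k ∈ univ.filter (fun k => k ≠ i ∧ k ≠ j), a k i ^ 2)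
          + ∑ i, ∑ j ∈ univ.filter (fun j => j ≠ i),
            ∑ k ∈ univ.filter (fun k => k ≠ i ∧ k ≠ j), a k j ^ 2) / 2 := by
          simp only [← Finset.sum_add_distrib, ← Finset.sum_div]
      _ = _ := by rw [hsym]; ring
  -- step 3: Cauchy–Schwarz on the diagonal term
  have step3 : (∑ i, ∑ j ∈ univ.filter (fun j => j ≠ i), a i i * a i j)
      ≤ Real.sqrt (((n : ℝ) - 1) * (∑ i, a i i ^ 2) *
          (∑ i, ∑ j ∈ univ.filter (fun j => j ≠ i), a i j ^ 2)) := by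
    have hx0 : 0 ≤ ∑ i, ∑ j ∈ univ.filter (fun j => j ≠ i), a i i * a i j :=
      Finset.sum_nonneg fun i _ => Finset.sum_nonneg fun j _ =>
        mul_nonneg (ha0 i i) (ha0 i j)
    apply Real.le_sqrt_of_sq_le
    have hcs := cs2 (fun i => univ.filter (fun j => j ≠ i))
      (fun i _ => a i i) (fun i j => a i j)
    refine hcs.trans ?_
    have hcard : ∀ i : Fin n, (univ.filter (fun j => j ≠ i)).card = n - 1 := by
      intro i
      rw [Finset.filter_ne', Finset.card_erase_of_mem (Finset.mem_univ i)]
      simp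
    have hconst : (∑ i, ∑ _j ∈ univ.filter (fun j => j ≠ i), a i i ^ 2)
        = ((n : ℝ) - 1) * ∑ i, a i i ^ 2 := by
      simp only [Finset.sum_const, hcard, nsmul_eq_mul, ← Finset.sum_mul]
      rw [Nat.cast_sub (by omega), Finset.mul_sum]
      push_cast
      simp [sub_mul, Finset.sum_sub_distrib, Finset.mul_sum]
    rw [hconst]
  -- combine
  calc ∑ i, ∑ j ∈ univ.filter (fun j => j ≠ i), ‖(Bᴴ * B) i j‖
      ≤ (∑ i, ∑ j ∈ univ.filter (fun j => j ≠ i),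
          ∑ k ∈ univ.filter (fun k => k ≠ i ∧ k ≠ j), a k i * a k j)
        + 2 * ∑ i, ∑ j ∈ univ.filter (fun j => j ≠ i), a i i * a i j := step1
    _ ≤ _ := add_le_add step2 (by linarith [step3])
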